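/- Let L be slowly varying at infinity (extended continuously with L(x) = 0 for x ≤ 1) and let f₀ be continuous with lim_{x→±∞} f₀(±x)·x/L(x) = ±c₀^±. Set F(x) = ∫₀^x f₀(t)dt. Then uniformly for x in compact subsets of ℝ∖{0}: F(λx) = F(sgn(x)·λ) + c₀^{sgn(x)}·L(λ)·log|x| + o(L(λ)) as λ → ∞. -/

import Mathlib

open Filter Topology MeasureTheory intervalIntegral

/-- Pointwise: log-shift of a slowly varying function tends to 0. -/
lemma sv_log_pointwise (L : ℝ → ℝ) (hLpos : ∀ x : ℝ, 1 < x → 0 < L x)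
    (hSV : ∀ a : ℝ, 0 < a → Tendsto (fun x => L (a * x) / L x) atTop (nhds 1)) (s : ℝ) :
    Tendsto (fun t => Real.log (L (Real.exp (t + s))) - Real.log (L (Real.exp t)))
      atTop (nhds 0) := by
  have ha : (0:ℝ) < Real.exp s := Real.exp_pos s
  have h1 : Tendsto (fun x => Real.log (L (Real.exp s * x) / L x)) atTop (nhds 0) := by
    have := (Real.continuousAt_log one_ne_zero).tendsto.comp (hSV _ ha)
    simpa [Real.log_one, Function.comp_def] using this
  have h2 : Tendsto (fun t : ℝ => Real.log (L (Real.exp s * Real.exp t) / L (Real.exp t)))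
      atTop (nhds 0) := h1.comp Real.tendsto_exp_atTop
  apply h2.congr'
  filter_upwards [eventually_ge_atTop (max 1 (1 - s))] with t ht
  have ht1 : (1:ℝ) < Real.exp t := by
    have : (0:ℝ) < t := lt_of_lt_of_le zero_lt_one (le_trans (le_max_left _ _) ht)
    simpa using Real.exp_lt_exp.mpr this
  have hts : (1:ℝ) < Real.exp (t + s) := by
    have : (0:ℝ) < t + s := by
      have := le_trans (le_max_right 1 (1 - s)) ht; linarith
    simpa using Real.exp_lt_exp.mpr this
  have he : Real.exp s * Real.exp t = Real.exp (t + s) := by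
    rw [← Real.exp_add]; ring_nf
  rw [he, Real.log_div (ne_of_gt (hLpos _ hts)) (ne_of_gt (hLpos _ ht1))]

/-- Uniform convergence theorem for slowly varying functions. -/
lemma sv_uct (L : ℝ → ℝ) (hLc : Continuous L) (hLpos : ∀ x : ℝ, 1 < x → 0 < L x)
    (hSV : ∀ a : ℝ, 0 < a → Tendsto (fun x => L (a * x) / L x) atTop (nhds 1))
    (S ε : ℝ) (hε : 0 < ε) :
    ∃ T : ℝ, ∀ t : ℝ, T ≤ t → ∀ s ∈ Set.Icc (0:ℝ) S,
      |Real.log (L (Real.exp (t + s))) - Real.log (L (Real.exp t))| ≤ ε := by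
  set h : ℝ → ℝ := fun t => Real.log (L (Real.exp t)) with hh
  have hmeas : Measurable h :=
    Real.measurable_log.comp (hLc.measurable.comp Real.continuous_exp.measurable)
  by_contra hcon
  push_neg at hcon
  choose t ht s hs hbad using fun n : ℕ => hcon n
  set S' : ℝ := max S 0 + 1 with hS'
  have hS'1 : (1:ℝ) ≤ S' := le_add_of_nonneg_left (le_max_right S 0)
  have hS'0 : (0:ℝ) < S' := by linarith
  have hsS' : ∀ n, s n ∈ Set.Icc (0:ℝ) S' := fun n =>
    ⟨(hs n).1, le_trans ((hs n).2) (le_trans (le_max_left _ _) (by linarith))⟩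
  set J : Set ℝ := Set.Icc (0:ℝ) (2 * S') with hJ
  have hJm : MeasurableSet J := measurableSet_Icc
  have hJfin : volume J ≠ ⊤ := by
    rw [hJ, Real.volume_Icc]; exact ENNReal.ofReal_ne_top
  have httop : Tendsto t atTop atTop :=
    tendsto_atTop_mono ht tendsto_natCast_atTop_atTop
  have hts_top : Tendsto (fun n => t n + s n) atTop atTop :=
    tendsto_atTop_mono (fun n => le_add_of_nonneg_right (hs n).1) httop
  -- two Egorov families
  set f : ℕ → ℝ → ℝ := fun n u => h (t n + u) - h (t n) with hf
  set f' : ℕ → ℝ → ℝ := fun n u => h (t n + s n + u) - h (t n + s n) with hf'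
  have hfm : ∀ n, StronglyMeasurable (f n) := fun n =>
    ((hmeas.comp (measurable_const.add measurable_id)).sub measurable_const).stronglyMeasurable
  have hf'm : ∀ n, StronglyMeasurable (f' n) := fun n =>
    ((hmeas.comp (measurable_const.add measurable_id)).sub measurable_const).stronglyMeasurable
  have hzm : StronglyMeasurable (fun _ : ℝ => (0:ℝ)) := stronglyMeasurable_const
  have hptf : ∀ᵐ u ∂volume, u ∈ J → Tendsto (fun n => f n u) atTop (nhds 0) := by
    refine Filter.Eventually.of_forall fun u _ => ?_
    exact (sv_log_pointwise L hLpos hSV u).comp httop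
  have hptf' : ∀ᵐ u ∂volume, u ∈ J → Tendsto (fun n => f' n u) atTop (nhds 0) := by
    refine Filter.Eventually.of_forall fun u _ => ?_
    exact (sv_log_pointwise L hLpos hSV u).comp hts_top
  have hquarter : (0:ℝ) < S' / 4 := by linarith
  obtain ⟨E, hEJ, hEm, hEμ, hEu⟩ :=
    tendstoUniformlyOn_of_ae_tendsto hfm hzm hJm hJfin hptf hquarter
  obtain ⟨E', hE'J, hE'm, hE'μ, hE'u⟩ :=
    tendstoUniformlyOn_of_ae_tendsto hf'm hzm hJm hJfin hptf' hquarter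
  -- uniform smallness
  have hεh : 0 < ε / 2 := by linarith
  obtain ⟨N₁, hN₁⟩ := eventually_atTop.mp ((Metric.tendstoUniformlyOn_iff.mp hEu) (ε/2) hεh)
  obtain ⟨N₂, hN₂⟩ := eventually_atTop.mp ((Metric.tendstoUniformlyOn_iff.mp hE'u) (ε/2) hεh)
  set n := max N₁ N₂ with hn
  -- find a good u
  have hIJ : Set.Icc (0:ℝ) S' ⊆ J := Set.Icc_subset_Icc le_rfl (by linarith)
  have hshiftJ : ∀ u ∈ Set.Icc (0:ℝ) S', s n + u ∈ J := by
    intro u hu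
    constructor
    · have := (hsS' n).1; have := hu.1; simp only [hJ, Set.mem_Icc] at *; linarith
    · have := (hsS' n).2; have := hu.2; simp only [hJ, Set.mem_Icc] at *; linarith
  have hexists : ∃ u ∈ Set.Icc (0:ℝ) S', u ∉ E' ∧ s n + u ∉ E := by
    by_contra hno
    push_neg at hno
    have hcover : Set.Icc (0:ℝ) S' ⊆ E' ∪ ((fun u => s n + u) ⁻¹' E) := by
      intro u hu
      by_cases hE'u : u ∈ E'
      · exact Or.inl hE'u
      · exact Or.inr (hno u hu hE'u)
    have hμ1 : volume (Set.Icc (0:ℝ) S') ≤ volume E' + volume ((fun u => s n + u) ⁻¹' E) :=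
      le_trans (measure_mono hcover) (measure_union_le _ _)
    have hμ2 : volume ((fun u => s n + u) ⁻¹' E) = volume E := measure_preimage_add _ _ _
    rw [hμ2, Real.volume_Icc] at hμ1
    have : ENNReal.ofReal (S' - 0) ≤ ENNReal.ofReal (S'/4) + ENNReal.ofReal (S'/4) :=
      le_trans hμ1 (add_le_add hE'μ hEμ)
    rw [← ENNReal.ofReal_add (by linarith) (by linarith)] at this
    have := (ENNReal.ofReal_le_ofReal_iff (by linarith)).mp this
    linarith
  obtain ⟨u, huI, huE', huE⟩ := hexists
  -- contradiction
  have h1 : dist 0 (f n (s n + u)) < ε/2 := by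
    refine hN₁ n (le_max_left _ _) (s n + u) ⟨hshiftJ u huI, huE⟩
  have h2 : dist 0 (f' n u) < ε/2 := by
    refine hN₂ n (le_max_right _ _) u ⟨hIJ huI, huE'⟩
  rw [dist_comm, Real.dist_eq, sub_zero] at h1 h2
  have hkey : h (t n + s n) - h (t n) = f n (s n + u) - f' n u := by
    simp only [hf, hf']
    have : t n + (s n + u) = t n + s n + u := by ring
    rw [this]; ring
  have : |h (t n + s n) - h (t n)| < ε := by
    rw [hkey]
    calc |f n (s n + u) - f' n u| ≤ |f n (s n + u)| + |f' n u| := abs_sub _ _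
      _ < ε/2 + ε/2 := add_lt_add h1 h2
      _ = ε := by ring
  exact absurd (hbad n) (not_lt.mpr (le_of_lt this))

/-- Uniform ratio bound for slowly varying L on compact multiplier sets. -/
lemma sv_ratio (L : ℝ → ℝ) (hLc : Continuous L) (hLpos : ∀ x : ℝ, 1 < x → 0 < L x)
    (hSV : ∀ a : ℝ, 0 < a → Tendsto (fun x => L (a * x) / L x) atTop (nhds 1))
    (m M ε : ℝ) (hm : 0 < m) (hm1 : m ≤ 1) (hM : 1 ≤ M) (hε : 0 < ε) :
    ∃ Λ : ℝ, 1 < Λ ∧ ∀ lam : ℝ, Λ ≤ lam → ∀ u ∈ Set.Icc m M,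
      |L (lam * u) - L lam| ≤ ε * L lam := by
  have hlm : Real.log m ≤ 0 := Real.log_nonpos (le_of_lt hm) hm1
  have hlM : 0 ≤ Real.log M := Real.log_nonneg hM
  set S : ℝ := Real.log M - Real.log m with hS
  have hε' : 0 < Real.log (1 + ε) / 2 := by
    have : (0:ℝ) < Real.log (1 + ε) := Real.log_pos (by linarith)
    linarith
  obtain ⟨T, hT⟩ := sv_uct L hLc hLpos hSV S _ hε'
  refine ⟨max (Real.exp (T - Real.log m)) (2 / m + 2), ?_, ?_⟩
  · have : (2:ℝ) ≤ 2 / m := by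
      rw [le_div_iff₀ hm]; nlinarith
    have := le_max_right (Real.exp (T - Real.log m)) (2 / m + 2)
    linarith
  intro lam hlam u hu
  have hu0 : 0 < u := lt_of_lt_of_le hm hu.1
  have h2m : (2:ℝ) ≤ 2 / m := by rw [le_div_iff₀ hm]; nlinarith
  have hlam2 : 2 / m + 2 ≤ lam := le_trans (le_max_right _ _) hlam
  have hlam1 : (1:ℝ) < lam := by linarith
  have hlam0 : (0:ℝ) < lam := by linarith
  have hlamu1 : (1:ℝ) < lam * u := by
    have h1 : 2 / m ≤ lam := by linarith
    have : 2 ≤ lam * m := by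
      rw [div_le_iff₀ hm] at h1; linarith
    nlinarith [hu.1]
  have hLl : 0 < L lam := hLpos _ hlam1
  have hLlu : 0 < L (lam * u) := hLpos _ hlamu1
  -- base point
  set τ : ℝ := Real.log lam + Real.log m with hτ
  have hTτ : T ≤ τ := by
    have : Real.exp (T - Real.log m) ≤ lam := le_trans (le_max_left _ _) hlam
    have := Real.log_le_log (Real.exp_pos _) this
    rw [Real.log_exp] at this
    simp only [hτ]; linarith
  -- two applications of UCT
  have hs₁ : Real.log u - Real.log m ∈ Set.Icc (0:ℝ) S := by
    constructor
    · have := Real.log_le_log hm hu.1; linarith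
    · have := Real.log_le_log hu0 hu.2; simp only [hS]; linarith
  have hs₂ : -Real.log m ∈ Set.Icc (0:ℝ) S := ⟨by linarith, by simp only [hS]; linarith⟩
  have h1 := hT τ hTτ _ hs₁
  have h2 := hT τ hTτ _ hs₂
  have he₁ : τ + (Real.log u - Real.log m) = Real.log (lam * u) := by
    rw [Real.log_mul (ne_of_gt hlam0) (ne_of_gt hu0)]; rw [hτ]; ring
  have he₂ : τ + -Real.log m = Real.log lam := by rw [hτ]; ring
  rw [he₁, Real.exp_log (by positivity)] at h1
  rw [he₂, Real.exp_log hlam0] at h2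
  -- combine
  have hτe : Real.exp τ = lam * m := by
    rw [hτ, Real.exp_add, Real.exp_log hlam0, Real.exp_log hm]
  have hlog : |Real.log (L (lam * u)) - Real.log (L lam)| ≤ Real.log (1 + ε) := by
    calc |Real.log (L (lam * u)) - Real.log (L lam)|
        ≤ |Real.log (L (lam * u)) - Real.log (L (Real.exp τ))|
          + |Real.log (L lam) - Real.log (L (Real.exp τ))| := by
            have := abs_sub_le (Real.log (L (lam * u))) (Real.log (L (Real.exp τ)))
              (Real.log (L lam))
            rw [abs_sub_comm (Real.log (L (Real.exp τ)))] at this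
            exact this
      _ ≤ Real.log (1 + ε) / 2 + Real.log (1 + ε) / 2 := add_le_add h1 h2
      _ = Real.log (1 + ε) := by ring
  set r : ℝ := L (lam * u) / L lam with hr
  have hr0 : 0 < r := div_pos hLlu hLl
  have hlogr : Real.log r = Real.log (L (lam * u)) - Real.log (L lam) :=
    Real.log_div (ne_of_gt hLlu) (ne_of_gt hLl)
  have hub : r ≤ 1 + ε := by
    have h3 : Real.log r ≤ Real.log (1 + ε) := by
      rw [hlogr]; exact le_trans (le_abs_self _) hlog
    exact (Real.log_le_log_iff hr0 (by linarith)).mp h3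
  have hlb : (1 + ε)⁻¹ ≤ r := by
    have h3 : -Real.log (1 + ε) ≤ Real.log r := by
      rw [hlogr]; have := neg_abs_le (Real.log (L (lam * u)) - Real.log (L lam)); linarith
    rw [← Real.log_inv] at h3
    exact (Real.log_le_log_iff (by positivity) hr0).mp h3
  have hrb : |r - 1| ≤ ε := by
    rw [abs_le]
    constructor
    · have hinv : 1 - ε ≤ (1 + ε)⁻¹ := by
        have hc : (1 + ε) * (1 + ε)⁻¹ = 1 := mul_inv_cancel₀ (by linarith)
        nlinarith [sq_nonneg ε]
      linarith
    · linarith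
  have : L (lam * u) = r * L lam := by rw [hr, div_mul_cancel₀ _ (ne_of_gt hLl)]
  rw [this]
  have heq : r * L lam - L lam = (r - 1) * L lam := by ring
  rw [heq, abs_mul, abs_of_pos hLl]
  exact mul_le_mul_of_nonneg_right hrb (le_of_lt hLl)

set_option maxHeartbeats 1000000 in
/-- Core integral asymptotic on the positive side. -/
lemma sv_core (L : ℝ → ℝ) (hLc : Continuous L) (hLpos : ∀ x : ℝ, 1 < x → 0 < L x)
    (hSV : ∀ a : ℝ, 0 < a → Tendsto (fun x => L (a * x) / L x) atTop (nhds 1))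
    (f : ℝ → ℝ) (hf : Continuous f) (c : ℝ)
    (hc : Tendsto (fun x => f x * x / L x) atTop (nhds c))
    (m M ε : ℝ) (hm : 0 < m) (hm1 : m ≤ 1) (hM : 1 ≤ M) (hε : 0 < ε) :
    ∃ Λ : ℝ, 1 < Λ ∧ ∀ lam : ℝ, Λ ≤ lam → ∀ x ∈ Set.Icc m M,
      |(∫ t in lam..(lam*x), f t) - c * L lam * Real.log x| ≤ ε * L lam := by
  set C₀ : ℝ := max (Real.log M) (-Real.log m) with hC₀
  have hC₀0 : 0 ≤ C₀ := le_trans (Real.log_nonneg hM) (le_max_left _ _)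
  obtain ⟨δ, hδ0, hδε⟩ : ∃ δ : ℝ, 0 < δ ∧ δ * (C₀ + 1) = ε :=
    ⟨ε / (C₀ + 1), div_pos hε (by linarith),
      div_mul_cancel₀ _ (ne_of_gt (by linarith : (0:ℝ) < C₀ + 1))⟩
  obtain ⟨T₀, hT₀⟩ := (Metric.tendsto_atTop.mp hc) (δ/4) (by linarith)
  set ε₂ : ℝ := min 1 (δ / (2 * (|c| + 1))) with hε₂
  have hε₂0 : 0 < ε₂ := lt_min one_pos (by positivity)
  have hε₂1 : ε₂ ≤ 1 := min_le_left _ _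
  obtain ⟨Λ₁, hΛ₁1, hΛ₁⟩ := sv_ratio L hLc hLpos hSV m M ε₂ hm hm1 hM hε₂0
  have h2m : (2:ℝ) ≤ 2 / m := by rw [le_div_iff₀ hm]; nlinarith
  refine ⟨max (max Λ₁ ((|T₀| + 2) / m)) (2 / m + 2), ?_, ?_⟩
  · have := le_max_right (max Λ₁ ((|T₀| + 2) / m)) (2 / m + 2)
    linarith
  intro lam hlam x hx
  have hx0 : 0 < x := lt_of_lt_of_le hm hx.1
  have hlam2 : 2 / m + 2 ≤ lam := le_trans (le_max_right _ _) hlam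
  have hlamΛ₁ : Λ₁ ≤ lam := le_trans (le_trans (le_max_left _ _) (le_max_left _ _)) hlam
  have hlamT : (|T₀| + 2) / m ≤ lam :=
    le_trans (le_trans (le_max_right _ _) (le_max_left _ _)) hlam
  have hlam1 : (1:ℝ) < lam := by linarith
  have hlam0 : (0:ℝ) < lam := by linarith
  have hlamm : |T₀| + 2 ≤ lam * m := by
    rw [div_le_iff₀ hm] at hlamT; linarith
  have hLl : 0 < L lam := hLpos _ hlam1
  -- the interval sits inside [lam*m, lam*M]
  have hsubI : Set.uIcc lam (lam * x) ⊆ Set.Icc (lam * m) (lam * M) := by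
    apply Set.uIcc_subset_Icc
    · constructor <;> nlinarith
    · constructor
      · nlinarith [hx.1]
      · nlinarith [hx.2]
  -- pointwise bound on the integrand
  have hptw : ∀ t ∈ Set.uIcc lam (lam * x), |f t - c * L lam / t| ≤ δ * L lam / t := by
    intro t ht
    have hmem : t ∈ Set.Icc (lam * m) (lam * M) := hsubI ht
    have htm : lam * m ≤ t := hmem.1
    have ht2 : (2:ℝ) ≤ t := by
      have : (0:ℝ) ≤ |T₀| := abs_nonneg _
      linarith
    have ht1 : (1:ℝ) < t := by linarith
    have ht0 : (0:ℝ) < t := by linarith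
    have htT₀ : T₀ ≤ t := by
      have := le_abs_self T₀; linarith
    have hLt : 0 < L t := hLpos _ ht1
    rw [le_div_iff₀ ht0]
    have habs : |f t - c * L lam / t| * t = |f t * t - c * L lam| := by
      have heq : (f t - c * L lam / t) * t = f t * t - c * L lam := by
        field_simp
      rw [← heq, abs_mul, abs_of_pos ht0]
    rw [habs]
    have h1 : |f t * t - c * L t| ≤ δ/4 * L t := by
      have hd := hT₀ t htT₀
      rw [Real.dist_eq] at hd
      have hft : f t * t - c * L t = (f t * t / L t - c) * L t := by
        field_simp
      rw [hft, abs_mul, abs_of_pos hLt]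
      exact mul_le_mul_of_nonneg_right hd.le hLt.le
    have hu : t / lam ∈ Set.Icc m M := by
      constructor
      · rw [le_div_iff₀ hlam0]; linarith [hmem.1]
      · rw [div_le_iff₀ hlam0]; linarith [hmem.2]
    have h2 : |L t - L lam| ≤ ε₂ * L lam := by
      have := hΛ₁ lam hlamΛ₁ (t / lam) hu
      rwa [mul_div_cancel₀ _ (ne_of_gt hlam0)] at this
    have hLt2 : L t ≤ 2 * L lam := by
      have ha := (abs_le.mp h2).2
      have hb := mul_le_mul_of_nonneg_right hε₂1 hLl.le
      linarith
    have hc2 : |c| * ε₂ ≤ δ / 2 := by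
      have ha : ε₂ ≤ δ / (2 * (|c| + 1)) := min_le_right _ _
      have hb : |c| * ε₂ ≤ |c| * (δ / (2 * (|c| + 1))) :=
        mul_le_mul_of_nonneg_left ha (abs_nonneg c)
      have hcc : |c| * (δ / (2 * (|c| + 1))) ≤ δ / 2 := by
        rw [mul_comm, div_mul_eq_mul_div, div_le_div_iff₀ (by positivity)
          (by norm_num : (0:ℝ) < 2)]
        nlinarith [abs_nonneg c]
      linarith
    have h3 : |c * L t - c * L lam| ≤ δ/2 * L lam := by
      rw [← mul_sub, abs_mul]
      calc |c| * |L t - L lam| ≤ |c| * (ε₂ * L lam) :=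
            mul_le_mul_of_nonneg_left h2 (abs_nonneg c)
        _ = (|c| * ε₂) * L lam := by ring
        _ ≤ δ/2 * L lam := mul_le_mul_of_nonneg_right hc2 hLl.le
    calc |f t * t - c * L lam| ≤ |f t * t - c * L t| + |c * L t - c * L lam| := by
          have heq : f t * t - c * L lam = (f t * t - c * L t) + (c * L t - c * L lam) := by
            ring
          rw [heq]; exact abs_add_le _ _
      _ ≤ δ/4 * L t + δ/2 * L lam := add_le_add h1 h3
      _ ≤ δ * L lam := by
          have := mul_le_mul_of_nonneg_left hLt2 (by positivity : (0:ℝ) ≤ δ/4)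
          linarith
  -- integral computations
  have h0not : (0:ℝ) ∉ Set.uIcc lam (lam * x) := by
    intro h0
    have := hsubI h0
    have : lam * m ≤ 0 := this.1
    nlinarith
  have hlog : ∀ d : ℝ, (∫ t in lam..(lam*x), d / t) = d * Real.log x := by
    intro d
    have h1 : (∫ t in lam..(lam*x), d / t) = d * ∫ t in lam..(lam*x), 1/t := by
      rw [← intervalIntegral.integral_const_mul]
      congr 1; ext t; ring
    rw [h1, integral_one_div h0not, mul_div_cancel_left₀ _ (ne_of_gt hlam0)]
  have hcont2 : ContinuousOn (fun t : ℝ => c * L lam / t) (Set.uIcc lam (lam * x)) :=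
    ContinuousOn.div continuousOn_const continuousOn_id (fun t ht h0 => h0not (h0 ▸ ht))
  have hcontb : ContinuousOn (fun t : ℝ => δ * L lam / t) (Set.uIcc lam (lam * x)) :=
    ContinuousOn.div continuousOn_const continuousOn_id (fun t ht h0 => h0not (h0 ▸ ht))
  have hint2 : IntervalIntegrable (fun t : ℝ => c * L lam / t) volume lam (lam * x) :=
    hcont2.intervalIntegrable
  have hintb : IntervalIntegrable (fun t : ℝ => δ * L lam / t) volume lam (lam * x) :=
    hcontb.intervalIntegrable
  have hsub : (∫ t in lam..(lam*x), f t) - c * L lam * Real.log x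
      = ∫ t in lam..(lam*x), (f t - c * L lam / t) := by
    rw [intervalIntegral.integral_sub (hf.intervalIntegrable _ _) hint2, hlog (c * L lam)]
  rw [hsub]
  have hnorm : |∫ t in lam..(lam*x), (f t - c * L lam / t)|
      ≤ |∫ t in lam..(lam*x), δ * L lam / t| := by
    rw [← Real.norm_eq_abs (∫ t in lam..(lam*x), (f t - c * L lam / t))]
    apply intervalIntegral.norm_integral_le_abs_of_norm_le ?_ hintb
    apply (ae_restrict_iff' measurableSet_uIoc).mpr
    apply Filter.Eventually.of_forall
    intro t ht
    simpa using hptw t (Set.uIoc_subset_uIcc ht)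
  have hval : |∫ t in lam..(lam*x), δ * L lam / t| = δ * L lam * |Real.log x| := by
    rw [hlog (δ * L lam), abs_mul, abs_of_pos (by positivity : (0:ℝ) < δ * L lam)]
  have hlogb : |Real.log x| ≤ C₀ := by
    rw [abs_le]
    constructor
    · have := Real.log_le_log hm hx.1
      have := le_max_right (Real.log M) (-Real.log m)
      simp only [hC₀]; linarith
    · have := Real.log_le_log hx0 hx.2
      have := le_max_left (Real.log M) (-Real.log m)
      simp only [hC₀]; linarith
  calc |∫ t in lam..(lam*x), (f t - c * L lam / t)|
      ≤ δ * L lam * |Real.log x| := by rw [← hval]; exact hnorm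
    _ ≤ δ * L lam * C₀ := by
        apply mul_le_mul_of_nonneg_left hlogb (by positivity)
    _ ≤ ε * L lam := by
        nlinarith [mul_nonneg hδ0.le hLl.le]

/-- Key pointwise asymptotic for the primitive F(x) = ∫₀ˣ f₀: uniformly for x in compact
subsets of ℝ∖{0}, F(λx) = F(sgn(x)λ) + c₀^{sgn(x)}·L(λ)·log|x| + o(L(λ)) as λ → ∞. -/
theorem primitive_asymptotics_signed (L : ℝ → ℝ) (hLc : Continuous L)
    (hLzero : ∀ x : ℝ, x ≤ 1 → L x = 0) (hLpos : ∀ x : ℝ, 1 < x → 0 < L x)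
    (hSV : ∀ a : ℝ, 0 < a → Tendsto (fun x => L (a * x) / L x) atTop (nhds 1))
    (cp cm : ℝ) (f₀ : ℝ → ℝ) (hf₀ : Continuous f₀)
    (hp : Tendsto (fun x => f₀ x * x / L x) atTop (nhds cp))
    (hm : Tendsto (fun x => f₀ (-x) * x / L x) atTop (nhds (-cm)))
    (F : ℝ → ℝ) (hF : ∀ x : ℝ, F x = ∫ t in (0:ℝ)..x, f₀ t) :
    ∀ K : Set ℝ, IsCompact K → K ⊆ {x : ℝ | x ≠ 0} →
      ∀ ε : ℝ, 0 < ε → ∃ Λ : ℝ, ∀ lam : ℝ, Λ ≤ lam → ∀ x ∈ K,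
        |F (lam * x) - F (if 0 < x then lam else -lam)
            - (if 0 < x then cp else cm) * L lam * Real.log (abs x)| ≤ ε * L lam := by
  intro K hK hK0 ε hε
  rcases K.eq_empty_or_nonempty with rfl | hne
  · exact ⟨0, fun lam _ x hx => absurd hx (Set.notMem_empty x)⟩
  -- lower bound on |x|
  obtain ⟨x₀, hx₀K, hx₀min⟩ := hK.exists_isMinOn hne continuous_abs.continuousOn
  have hx₀0 : 0 < |x₀| := abs_pos.mpr (hK0 hx₀K)
  set m : ℝ := min |x₀| 1 with hmdef
  have hm0 : 0 < m := lt_min hx₀0 one_pos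
  have hm1 : m ≤ 1 := min_le_right _ _
  have hmlb : ∀ x ∈ K, m ≤ |x| := fun x hx =>
    le_trans (min_le_left _ _) (hx₀min hx)
  -- upper bound on |x|
  obtain ⟨r, hr⟩ := hK.isBounded.subset_closedBall 0
  set M : ℝ := max r 1 with hMdef
  have hM1 : (1:ℝ) ≤ M := le_max_right _ _
  have hMub : ∀ x ∈ K, |x| ≤ M := by
    intro x hx
    have := hr hx
    rw [Metric.mem_closedBall, Real.dist_eq, sub_zero] at this
    exact le_trans this (le_max_left _ _)
  -- apply core lemma on both sides
  obtain ⟨Λp, hΛp1, hΛp⟩ := sv_core L hLc hLpos hSV f₀ hf₀ cp hp m M ε hm0 hm1 hM1 hε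
  obtain ⟨Λm, hΛm1, hΛm⟩ := sv_core L hLc hLpos hSV (fun t => f₀ (-t))
    (hf₀.comp continuous_neg) (-cm) hm m M ε hm0 hm1 hM1 hε
  refine ⟨max Λp Λm, fun lam hlam x hx => ?_⟩
  have hlamp : Λp ≤ lam := le_trans (le_max_left _ _) hlam
  have hlamm : Λm ≤ lam := le_trans (le_max_right _ _) hlam
  have hxmem : |x| ∈ Set.Icc m M := ⟨hmlb x hx, hMub x hx⟩
  have hx0 : x ≠ 0 := hK0 hx
  by_cases hxpos : 0 < x
  · simp only [if_pos hxpos]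
    have habs : |x| = x := abs_of_pos hxpos
    have hFF : F (lam * x) - F lam = ∫ t in lam..(lam*x), f₀ t := by
      rw [hF (lam * x), hF lam]
      exact integral_interval_sub_left (hf₀.intervalIntegrable _ _)
        (hf₀.intervalIntegrable _ _)
    have key := hΛp lam hlamp x (habs ▸ hxmem)
    rw [habs, hFF]
    exact key
  · simp only [if_neg hxpos]
    have hxneg : x < 0 := lt_of_le_of_ne (not_lt.mp hxpos) hx0
    have habs : |x| = -x := abs_of_neg hxneg
    have hxm : -x ∈ Set.Icc m M := habs ▸ hxmem
    have hint : (∫ t in lam..(lam * -x), f₀ (-t)) = F (-lam) - F (lam * x) := by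
      rw [intervalIntegral.integral_comp_neg fun t => f₀ t]
      have h1 : -(lam * -x) = lam * x := by ring
      rw [h1, hF (-lam), hF (lam * x)]
      rw [integral_interval_sub_left (hf₀.intervalIntegrable _ _)
        (hf₀.intervalIntegrable _ _)]
    have := hΛm lam hlamm (-x) hxm
    rw [hint] at this
    have heq : F (-lam) - F (lam * x) - -cm * L lam * Real.log (-x)
        = -(F (lam * x) - F (-lam) - cm * L lam * Real.log (-x)) := by ring
    rw [heq, abs_neg] at this
    rwa [habs]
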